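/- arXiv:1204.3784 — 9 statements merged into one kernel-verified Lean document; each statement's English description precedes it below -/
import Mathlib

section
/- Let δ ∈ {0,1}, let V ⊆ ℂ be open, let h, r : V → ℂ be complex-differentiable with r'(t) = −(δ + 1/2)h(t) on V, and let φ : ℂ × V → ℂ be complex-differentiable in t and twice complex-differentiable in z at every point. Set u(t) = (1/2)(h'(t) + h(t)²) and ψ(z,t) = exp(−(1/2)h(t)z² + r(t)) φ(z,t). Then ψ solves the heat equation ∂ψ/∂t = (1/2)∂²ψ/∂z² on ℂ × V if and only if φ satisfies ∂φ/∂t = (1/2)∂²φ/∂z² + u(t) z² φ − h(t)(z ∂φ/∂z − δφ) on ℂ × V. -/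
/-- Theorem 4 (paper Thm 3.1): `ψ(z,t) = exp(-(1/2)h(t)z² + r(t)) φ(z,t)`
solves the heat equation iff `φ` satisfies
`∂φ/∂t = (1/2)∂²φ/∂z² + u z² φ - h (z ∂φ/∂z - δ φ)` where
`u = (1/2)(h' + h²)` and `r' = -(δ + 1/2)h`. -/
theorem heat_equation_ansatz_iff
    (δ : ℕ) (hδ : δ = 0 ∨ δ = 1)
    (V : Set ℂ) (hV : IsOpen V)
    (h r : ℂ → ℂ) (hh : DifferentiableOn ℂ h V) (hr : DifferentiableOn ℂ r V)
    (hr' : ∀ t ∈ V, deriv r t = -((δ : ℂ) + 1 / 2) * h t)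
    (φ : ℂ → ℂ → ℂ)
    (hφt : ∀ z : ℂ, ∀ t ∈ V, DifferentiableAt ℂ (fun u => φ z u) t)
    (hφz : ∀ z : ℂ, ∀ t ∈ V, DifferentiableAt ℂ (fun w => φ w t) z ∧
      DifferentiableAt ℂ (deriv fun w => φ w t) z)
    (u : ℂ → ℂ) (hu : ∀ t, u t = (1 / 2) * (deriv h t + h t ^ 2))
    (ψ : ℂ → ℂ → ℂ)
    (hψ : ∀ z t, ψ z t = Complex.exp (-(1 / 2) * h t * z ^ 2 + r t) * φ z t) :
    (∀ z : ℂ, ∀ t ∈ V,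
        deriv (fun v => ψ z v) t = (1 / 2) * deriv (deriv fun w => ψ w t) z) ↔
    (∀ z : ℂ, ∀ t ∈ V,
        deriv (fun v => φ z v) t =
          (1 / 2) * deriv (deriv fun w => φ w t) z + u t * z ^ 2 * φ z t
            - h t * (z * deriv (fun w => φ w t) z - (δ : ℂ) * φ z t)) := by
  -- derivative of the gaussian factor in z
  have hexp : ∀ (c d w : ℂ), HasDerivAt (fun x : ℂ => Complex.exp (-(1/2)*c*x^2 + d))
      (Complex.exp (-(1/2)*c*w^2 + d) * (-(c*w))) w := by
    intro c d w
    have h1 : HasDerivAt (fun x : ℂ => -(1/2)*c*x^2 + d) (-(c*w)) w := by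
      have h2 := ((hasDerivAt_pow 2 w).const_mul (-(1/2)*c)).add_const d
      have he : -(c*w) = -(1/2)*c*(2*w^1) := by ring
      rw [he]; exact h2
    exact h1.cexp
  -- first z-derivative of ψ
  have hz1 : ∀ t ∈ V, ∀ z : ℂ, deriv (fun w => ψ w t) z =
      Complex.exp (-(1/2)*h t*z^2 + r t) *
        (-(h t * z) * φ z t + deriv (fun w => φ w t) z) := by
    intro t ht z
    have hfe : (fun w => ψ w t) =
        fun w => Complex.exp (-(1/2)*h t*w^2 + r t) * φ w t := by
      funext w; exact hψ w t
    rw [hfe]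
    have hd := (hexp (h t) (r t) z).mul ((hφz z t ht).1.hasDerivAt)
    rw [(show HasDerivAt (fun w => Complex.exp (-(1/2)*h t*w^2 + r t) * φ w t) _ z from hd).deriv]; ring
  -- second z-derivative of ψ
  have hz2 : ∀ t ∈ V, ∀ z : ℂ, deriv (deriv fun w => ψ w t) z =
      Complex.exp (-(1/2)*h t*z^2 + r t) *
        ((h t^2*z^2 - h t) * φ z t - 2*h t*z*deriv (fun w => φ w t) z
          + deriv (deriv fun w => φ w t) z) := by
    intro t ht z
    have hfe : (deriv fun w => ψ w t) =
        fun w => Complex.exp (-(1/2)*h t*w^2 + r t) *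
          (-(h t * w) * φ w t + deriv (fun w => φ w t) w) := by
      funext w; exact hz1 t ht w
    rw [hfe]
    have hG : HasDerivAt (fun w => -(h t * w) * φ w t + deriv (fun w => φ w t) w)
        ((-(h t) * φ z t + -(h t * z) * deriv (fun w => φ w t) z)
          + deriv (deriv fun w => φ w t) z) z := by
      have h1 : HasDerivAt (fun w : ℂ => -(h t * w)) (-(h t)) z := by
        have h2 := (hasDerivAt_id z).const_mul (-(h t))
        simpa using h2
      exact (h1.mul ((hφz z t ht).1.hasDerivAt)).add ((hφz z t ht).2.hasDerivAt)
    have hd := (hexp (h t) (r t) z).mul hG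
    rw [(show HasDerivAt (fun w => Complex.exp (-(1/2)*h t*w^2 + r t) * (-(h t * w) * φ w t + deriv (fun w => φ w t) w)) _ z from hd).deriv]; ring
  -- t-derivative of ψ
  have ht1 : ∀ (z : ℂ), ∀ t ∈ V, deriv (fun v => ψ z v) t =
      Complex.exp (-(1/2)*h t*z^2 + r t) *
        ((-(1/2)*deriv h t*z^2 + deriv r t) * φ z t + deriv (fun v => φ z v) t) := by
    intro z t ht
    have hfe : (fun v => ψ z v) =
        fun v => Complex.exp (-(1/2)*h v*z^2 + r v) * φ z v := by
      funext v; exact hψ z v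
    rw [hfe]
    have hhd : HasDerivAt h (deriv h t) t := (hh.differentiableAt (hV.mem_nhds ht)).hasDerivAt
    have hrd : HasDerivAt r (deriv r t) t := (hr.differentiableAt (hV.mem_nhds ht)).hasDerivAt
    have hin : HasDerivAt (fun v : ℂ => -(1/2)*h v*z^2 + r v)
        (-(1/2)*deriv h t*z^2 + deriv r t) t := by
      exact ((hhd.const_mul (-(1/2 : ℂ))).mul_const (z^2)).add hrd
    have hd := hin.cexp.mul (hφt z t ht).hasDerivAt
    rw [(show HasDerivAt (fun v => Complex.exp (-(1/2)*h v*z^2 + r v) * φ z v) _ t from hd).deriv]; ring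
  constructor
  · intro H z t htV
    have H1 := H z t htV
    rw [ht1 z t htV, hz2 t htV z] at H1
    have hE : Complex.exp (-(1/2)*h t*z^2 + r t) ≠ 0 := Complex.exp_ne_zero _
    have key : (-(1/2)*deriv h t*z^2 + deriv r t) * φ z t + deriv (fun v => φ z v) t
        = (1/2) * ((h t^2*z^2 - h t) * φ z t - 2*h t*z*deriv (fun w => φ w t) z
            + deriv (deriv fun w => φ w t) z) :=
      mul_left_cancel₀ hE (by linear_combination H1)
    rw [hu t]
    linear_combination key - φ z t * hr' t htV
  · intro H z t htV
    have H1 := H z t htV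
    rw [hu t] at H1
    rw [ht1 z t htV, hz2 t htV z]
    have key : (-(1/2)*deriv h t*z^2 + deriv r t) * φ z t + deriv (fun v => φ z v) t
        = (1/2) * ((h t^2*z^2 - h t) * φ z t - 2*h t*z*deriv (fun w => φ w t) z
            + deriv (deriv fun w => φ w t) z) := by
      linear_combination H1 + φ z t * hr' t htV
    linear_combination Complex.exp (-(1/2)*h t*z^2 + r t) * key
end

section
/- Let n ≥ 1, δ ∈ {0,1}, and let R = ℂ[x₂,…,x_{n+1}] be a polynomial ring. Let p₃,…,p_{n+2} ∈ R, let L₂ : R → R be the ℂ-linear derivation determined by L₂(x_k) = p_{k+1} for k = 2,…,n+1, and let u ∈ R. Let (Φ_k)_{k≥2} be a sequence in R and let Φ ∈ R[[X]] be the formal power series Φ = X^δ + Σ_{k≥2} Φ_k X^{2k+δ}/(2k+δ)!. Then the identity (1/2)Φ'' + u X² Φ = L₂Φ holds in R[[X]] (where Φ'' is the second formal derivative in X and L₂ acts coefficientwise) if and only if Φ₂ = −4(1+2δ)u, Φ₃ = 2 L₂Φ₂, and Φ_{k+1} = 2 L₂Φ_k + ((2k+δ−1)(2k+δ)/(2(1+2δ)))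 Φ₂ Φ_{k−1} for all k ≥ 3. -/
private lemma cancelC {n : ℕ} (c : ℂ) (hc : c ≠ 0) {A B X Y : MvPolynomial (Fin n) ℂ}
    (h : A - B = MvPolynomial.C c * (X - Y)) : A = B ↔ X = Y := by
  rw [← sub_eq_zero, h, mul_eq_zero, ← sub_eq_zero (a := X)]
  simp [hc]

private lemma factC_ne (N : ℕ) : (N.factorial : ℂ) ≠ 0 := Nat.cast_ne_zero.2 N.factorial_ne_zero

private lemma castC_ne (N : ℕ) (h : 0 < N) : (N : ℂ) ≠ 0 := Nat.cast_ne_zero.2 (by omega)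

private lemma fact1 (N : ℕ) :
    (((N+2).factorial : ℂ))⁻¹ * ((N:ℂ)+2) * ((N:ℂ)+1) = ((N.factorial : ℂ))⁻¹ := by
  have h0 := factC_ne N
  have h1 : (N:ℂ)+1 ≠ 0 := by
    have := castC_ne (N+1) (by omega); push_cast at this; exact this
  have h2 : (N:ℂ)+2 ≠ 0 := by
    have := castC_ne (N+2) (by omega); push_cast at this; exact this
  have h3 : (((N+2).factorial : ℂ)) = ((N:ℂ)+2) * (((N:ℂ)+1) * (N.factorial : ℂ)) := by
    rw [Nat.factorial_succ, Nat.factorial_succ]; push_cast; ring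
  rw [h3]; field_simp



/-- The formal power series `Φ = X^δ + Σ_{k≥2} Φ_k X^{2k+δ}/(2k+δ)!` over
`R = ℂ[x₂,…,x_{n+1}]` satisfies `(1/2)Φ'' + u X² Φ = L₂Φ` (with `L₂` the
derivation sending `x_k ↦ p_{k+1}`, acting coefficientwise on series) iff the
coefficients satisfy the recursion of Theorem 3.3 of the paper.
Here the variable `MvPolynomial.X i` stands for `x_{i+2}` and `p i` for
`p_{i+3}`. -/
theorem series_heat_recursion_iff
    (n : ℕ) (hn : 1 ≤ n) (δ : ℕ) (hδ : δ = 0 ∨ δ = 1)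
    (p : Fin n → MvPolynomial (Fin n) ℂ)
    (L₂ : Derivation ℂ (MvPolynomial (Fin n) ℂ) (MvPolynomial (Fin n) ℂ))
    (hL₂ : L₂ = MvPolynomial.mkDerivation ℂ p)
    (u : MvPolynomial (Fin n) ℂ)
    (Φ : ℕ → MvPolynomial (Fin n) ℂ)
    (Φser : PowerSeries (MvPolynomial (Fin n) ℂ))
    (hΦser : Φser = PowerSeries.X ^ δ + PowerSeries.mk fun m =>
      if 4 + δ ≤ m ∧ (m - δ) % 2 = 0 then
        MvPolynomial.C ((m.factorial : ℂ))⁻¹ * Φ ((m - δ) / 2) else 0) :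
    (PowerSeries.C (R := MvPolynomial (Fin n) ℂ) (MvPolynomial.C ((1 : ℂ) / 2)) *
          PowerSeries.derivative (R := MvPolynomial (Fin n) ℂ)
            (PowerSeries.derivative (R := MvPolynomial (Fin n) ℂ) Φser)
        + PowerSeries.C (R := MvPolynomial (Fin n) ℂ) u * PowerSeries.X ^ 2 * Φser
      = PowerSeries.mk fun m => L₂ (PowerSeries.coeff (R := MvPolynomial (Fin n) ℂ) m Φser)) ↔
    (Φ 2 = MvPolynomial.C (-4 * (1 + 2 * (δ : ℂ))) * u ∧
     Φ 3 = 2 * L₂ (Φ 2) ∧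
     ∀ k ≥ 3, Φ (k + 1) = 2 * L₂ (Φ k) +
       MvPolynomial.C (((2 * (k : ℂ) + (δ : ℂ) - 1) * (2 * (k : ℂ) + (δ : ℂ))) /
           (2 * (1 + 2 * (δ : ℂ)))) * (Φ 2 * Φ (k - 1))) := by

  have hδ1 : δ ≤ 1 := by omega
  set a : ℕ → MvPolynomial (Fin n) ℂ := fun m => PowerSeries.coeff (R := MvPolynomial (Fin n) ℂ) m Φser with hadef
  have ha : ∀ m, a m = (if m = δ then 1 else 0) +
      (if 4 + δ ≤ m ∧ (m - δ) % 2 = 0 then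
        MvPolynomial.C ((m.factorial : ℂ))⁻¹ * Φ ((m - δ) / 2) else 0) := by
    intro m
    simp [hadef, hΦser, PowerSeries.coeff_X_pow]
  have key : (PowerSeries.C (R := MvPolynomial (Fin n) ℂ) (MvPolynomial.C ((1 : ℂ) / 2)) *
          PowerSeries.derivative (R := MvPolynomial (Fin n) ℂ)
            (PowerSeries.derivative (R := MvPolynomial (Fin n) ℂ) Φser)
        + PowerSeries.C (R := MvPolynomial (Fin n) ℂ) u * PowerSeries.X ^ 2 * Φser
      = PowerSeries.mk fun m => L₂ (PowerSeries.coeff (R := MvPolynomial (Fin n) ℂ) m Φser)) ↔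
      ∀ m : ℕ, MvPolynomial.C ((1:ℂ)/2) * (a (m+2) *
          ((m : MvPolynomial (Fin n) ℂ)+2) * ((m : MvPolynomial (Fin n) ℂ)+1))
        + (if 2 ≤ m then u * a (m-2) else 0) = L₂ (a m) := by
    rw [PowerSeries.ext_iff]
    apply forall_congr'; intro m
    simp only [map_add, mul_assoc, PowerSeries.coeff_C_mul, PowerSeries.coeff_derivative,
      PowerSeries.coeff_X_pow_mul', PowerSeries.coeff_mk, hadef]
    constructor <;> intro h <;>
    · simp only [mul_ite, mul_zero] at h ⊢
      push_cast at h ⊢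
      linear_combination h
  rw [key]
  have haδ : a δ = 1 := by rw [ha, if_pos rfl, if_neg (by omega)]; ring
  have hak : ∀ k, 2 ≤ k → a (2*k+δ) =
      MvPolynomial.C (((2*k+δ).factorial : ℂ))⁻¹ * Φ k := by
    intro k hk
    have h2 : (2*k+δ-δ)/2 = k := by omega
    rw [ha, if_neg (by omega), if_pos ⟨by omega, by omega⟩, h2]; ring
  have haz : ∀ m, m ≠ δ → ¬(4 + δ ≤ m ∧ (m - δ) % 2 = 0) → a m = 0 := by
    intro m h1 h2; rw [ha, if_neg h1, if_neg h2]; ring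
  have hL : ∀ (c : ℂ) (x : MvPolynomial (Fin n) ℂ),
      L₂ (MvPolynomial.C c * x) = MvPolynomial.C c * L₂ x := by
    intro c x
    rw [← MvPolynomial.smul_eq_C_mul, Derivation.map_smul, MvPolynomial.smul_eq_C_mul]
  have hone : (1+2*(δ:ℂ)) ≠ 0 := by
    rcases hδ with h | h <;> subst h <;> norm_num
  -- E2 : equation at m = δ+2
  have E2 : (MvPolynomial.C ((1:ℂ)/2) * (a (δ+2+2) *
          (((δ+2 : ℕ) : MvPolynomial (Fin n) ℂ)+2) * (((δ+2:ℕ) : MvPolynomial (Fin n) ℂ)+1))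
        + (if 2 ≤ δ+2 then u * a (δ+2-2) else 0) = L₂ (a (δ+2))) ↔
      Φ 2 = MvPolynomial.C (-4 * (1 + 2 * (δ : ℂ))) * u := by
    rw [if_pos (by omega), show δ+2-2 = δ from by omega, haδ,
        show δ+2+2 = 2*2+δ from by omega, hak 2 le_rfl,
        haz (δ+2) (by omega) (by omega), map_zero]
    set f : ℂ := (((2*2+δ).factorial : ℂ))⁻¹ with hf
    set c : ℂ := (1/2) * f * ((δ:ℂ)+4) * ((δ:ℂ)+3) with hcdef
    have hcast1 : (((δ+2 : ℕ) : MvPolynomial (Fin n) ℂ)+2) = MvPolynomial.C ((δ:ℂ)+4) := by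
      simp only [map_add, map_natCast, map_ofNat, map_one]; push_cast; ring
    have hcast2 : (((δ+2 : ℕ) : MvPolynomial (Fin n) ℂ)+1) = MvPolynomial.C ((δ:ℂ)+3) := by
      simp only [map_add, map_natCast, map_ofNat, map_one]; push_cast; ring
    have hc : c ≠ 0 := by
      have h4 : ((δ:ℂ)+4) ≠ 0 := by
        have := castC_ne (δ+4) (by omega); push_cast at this; exact this
      have h3 : ((δ:ℂ)+3) ≠ 0 := by
        have := castC_ne (δ+3) (by omega); push_cast at this; exact this
      exact mul_ne_zero (mul_ne_zero (mul_ne_zero (by norm_num) (inv_ne_zero (factC_ne _))) h4) h3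
    apply cancelC c hc
    have h1 : (MvPolynomial.C c : MvPolynomial (Fin n) ℂ) = MvPolynomial.C ((1:ℂ)/2) * MvPolynomial.C f *
        MvPolynomial.C ((δ:ℂ)+4) * MvPolynomial.C ((δ:ℂ)+3) := by
      rw [hcdef, map_mul, map_mul, map_mul]
    have hcc : c * (-4 * (1 + 2 * (δ:ℂ))) = -1 := by
      rw [hcdef, hf]
      rcases hδ with h | h <;> subst h <;> norm_num [Nat.factorial] <;> ring
    have h2 : MvPolynomial.C c * MvPolynomial.C (-4 * (1 + 2 * (δ:ℂ))) =
        (-1 : MvPolynomial (Fin n) ℂ) := by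
      rw [← map_mul, hcc]; simp
    rw [hcast1, hcast2]
    linear_combination u * h2 - Φ 2 * h1
  -- E3 : equation at m = δ+4 = 2*2+δ
  have E3 : (MvPolynomial.C ((1:ℂ)/2) * (a (2*2+δ+2) *
          (((2*2+δ : ℕ) : MvPolynomial (Fin n) ℂ)+2) * (((2*2+δ:ℕ) : MvPolynomial (Fin n) ℂ)+1))
        + (if 2 ≤ 2*2+δ then u * a (2*2+δ-2) else 0) = L₂ (a (2*2+δ))) ↔
      Φ 3 = 2 * L₂ (Φ 2) := by
    rw [if_pos (by omega), show 2*2+δ-2 = δ+2 from by omega,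
        haz (δ+2) (by omega) (by omega),
        show 2*2+δ+2 = 2*3+δ from by omega, hak 3 (by omega), hak 2 le_rfl, hL]
    set f6 : ℂ := (((2*3+δ).factorial : ℂ))⁻¹ with hf6
    set f4 : ℂ := (((2*2+δ).factorial : ℂ))⁻¹ with hf4
    set c : ℂ := (1/2) * f6 * ((δ:ℂ)+6) * ((δ:ℂ)+5) with hcdef
    have hcast1 : (((2*2+δ : ℕ) : MvPolynomial (Fin n) ℂ)+2) = MvPolynomial.C ((δ:ℂ)+6) := by
      simp only [map_add, map_natCast, map_ofNat, map_one]; push_cast; ring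
    have hcast2 : (((2*2+δ : ℕ) : MvPolynomial (Fin n) ℂ)+1) = MvPolynomial.C ((δ:ℂ)+5) := by
      simp only [map_add, map_natCast, map_ofNat, map_one]; push_cast; ring
    have hc : c ≠ 0 := by
      have h6 : ((δ:ℂ)+6) ≠ 0 := by
        have := castC_ne (δ+6) (by omega); push_cast at this; exact this
      have h5 : ((δ:ℂ)+5) ≠ 0 := by
        have := castC_ne (δ+5) (by omega); push_cast at this; exact this
      exact mul_ne_zero (mul_ne_zero (mul_ne_zero (by norm_num) (inv_ne_zero (factC_ne _))) h6) h5
    apply cancelC c hc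
    have h1 : (MvPolynomial.C c : MvPolynomial (Fin n) ℂ) = MvPolynomial.C ((1:ℂ)/2) * MvPolynomial.C f6 *
        MvPolynomial.C ((δ:ℂ)+6) * MvPolynomial.C ((δ:ℂ)+5) := by
      rw [hcdef, map_mul, map_mul, map_mul]
    have hcc : 2 * c = f4 := by
      rw [hcdef, hf6, hf4]
      have := fact1 (2*2+δ)
      rw [show 2*2+δ+2 = 2*3+δ from by omega] at this
      push_cast at this ⊢
      linear_combination this
    have h2 : (2:MvPolynomial (Fin n) ℂ) * MvPolynomial.C c = MvPolynomial.C f4 := by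
      rw [(map_ofNat (MvPolynomial.C : ℂ →+* MvPolynomial (Fin n) ℂ) 2).symm, ← map_mul, hcc]
    rw [hcast1, hcast2]
    linear_combination (L₂ (Φ 2)) * h2 - Φ 3 * h1
  have Ek : ∀ k, 3 ≤ k →
      ((MvPolynomial.C ((1:ℂ)/2) * (a (2*k+δ+2) *
          (((2*k+δ : ℕ) : MvPolynomial (Fin n) ℂ)+2) * (((2*k+δ:ℕ) : MvPolynomial (Fin n) ℂ)+1))
        + (if 2 ≤ 2*k+δ then u * a (2*k+δ-2) else 0) = L₂ (a (2*k+δ))) ↔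
      Φ (k + 1) = 2 * L₂ (Φ k) +
       MvPolynomial.C (((2 * (k : ℂ) + (δ : ℂ) - 1) * (2 * (k : ℂ) + (δ : ℂ))) /
           (2 * (1 + 2 * (δ : ℂ)))) *
         (MvPolynomial.C (-4 * (1 + 2 * (δ : ℂ))) * u * Φ (k - 1))) := by
    intro k hk
    rw [if_pos (by omega), show 2*k+δ-2 = 2*(k-1)+δ from by omega,
        show 2*k+δ+2 = 2*(k+1)+δ from by omega, hak (k+1) (by omega), hak (k-1) (by omega),
        hak k (by omega), hL]
    set F2 : ℂ := (((2*(k+1)+δ).factorial : ℂ))⁻¹ with hF2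
    set F0 : ℂ := (((2*k+δ).factorial : ℂ))⁻¹ with hF0
    set Fm : ℂ := (((2*(k-1)+δ).factorial : ℂ))⁻¹ with hFm
    set c : ℂ := (1/2) * F0 with hcdef
    have hc : c ≠ 0 := mul_ne_zero (by norm_num) (inv_ne_zero (factC_ne _))
    apply cancelC c hc
    have hcast1 : (((2*k+δ : ℕ) : MvPolynomial (Fin n) ℂ)+2)
        = MvPolynomial.C (2*(k:ℂ)+(δ:ℂ)+2) := by
      simp only [map_add, map_natCast, map_ofNat, map_mul, map_one]; push_cast; ring
    have hcast2 : (((2*k+δ : ℕ) : MvPolynomial (Fin n) ℂ)+1)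
        = MvPolynomial.C (2*(k:ℂ)+(δ:ℂ)+1) := by
      simp only [map_add, map_natCast, map_ofNat, map_mul, map_one]; push_cast; ring
    have hA := fact1 (2*k+δ)
    rw [show 2*k+δ+2 = 2*(k+1)+δ from by omega] at hA
    have hcst : ((2*(k-1)+δ : ℕ) : ℂ) = 2*(k:ℂ)+(δ:ℂ)-2 := by
      rw [show 2*(k-1)+δ = 2*k+δ-2 from by omega, Nat.cast_sub (by omega)]; push_cast; ring
    have hB := fact1 (2*(k-1)+δ)
    rw [show 2*(k-1)+δ+2 = 2*k+δ from by omega, hcst] at hB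
    push_cast at hA hB
    have h1 : MvPolynomial.C ((1:ℂ)/2) * MvPolynomial.C F2 *
        MvPolynomial.C (2*(k:ℂ)+(δ:ℂ)+2) * MvPolynomial.C (2*(k:ℂ)+(δ:ℂ)+1)
        = (MvPolynomial.C c : MvPolynomial (Fin n) ℂ) := by
      rw [← map_mul, ← map_mul, ← map_mul]
      exact congrArg MvPolynomial.C (by rw [hcdef]; linear_combination (1/2) * hA)
    have h2 : (MvPolynomial.C c : MvPolynomial (Fin n) ℂ) *
        MvPolynomial.C (((2 * (k : ℂ) + (δ : ℂ) - 1) * (2 * (k : ℂ) + (δ : ℂ))) /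
           (2 * (1 + 2 * (δ : ℂ)))) * MvPolynomial.C (-4 * (1 + 2 * (δ : ℂ)))
        = - MvPolynomial.C Fm := by
      rw [← map_mul, ← map_mul, ← map_neg]
      refine congrArg MvPolynomial.C ?_
      rw [hcdef]
      have hx : ((2*(k:ℂ)+(δ:ℂ)-1)*(2*(k:ℂ)+(δ:ℂ))) / (2*(1+2*(δ:ℂ))) * (2*(1+2*(δ:ℂ)))
          = (2*(k:ℂ)+(δ:ℂ)-1)*(2*(k:ℂ)+(δ:ℂ)) :=
        div_mul_cancel₀ _ (mul_ne_zero two_ne_zero hone)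
      linear_combination -hB + (1/2 * (((2*k+δ).factorial : ℂ))⁻¹ * (-2)) * hx
    have h3 : (2:MvPolynomial (Fin n) ℂ) * MvPolynomial.C c = MvPolynomial.C F0 := by
      rw [(map_ofNat (MvPolynomial.C : ℂ →+* MvPolynomial (Fin n) ℂ) 2).symm, ← map_mul]
      exact congrArg MvPolynomial.C (by rw [hcdef]; ring)
    rw [hcast1, hcast2]
    linear_combination (Φ (k+1)) * h1 + (L₂ (Φ k)) * h3 + (u * Φ (k-1)) * h2
  constructor
  · intro h
    have h2 := E2.mp (h (δ+2))
    refine ⟨h2, E3.mp (h (2*2+δ)), ?_⟩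
    intro k hk
    have hr := (Ek k hk).mp (h (2*k+δ))
    rw [h2]
    exact hr
  · rintro ⟨h2, h3, hrec⟩
    intro m
    by_cases hp : m % 2 = δ % 2
    · obtain ⟨j, rfl⟩ : ∃ j, m = 2*j + δ := ⟨(m-δ)/2, by omega⟩
      rcases Nat.lt_or_ge j 3 with hj | hj
      · interval_cases j
        · rw [show 2*0+δ+2 = δ+2 from by omega, show 2*0+δ = δ from by omega,
              haz (δ+2) (by omega) (by omega), haδ, if_neg (by omega),
              Derivation.map_one_eq_zero]
          simp
        · rw [show 2*1+δ = δ+2 from by omega]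
          exact E2.mpr h2
        · exact E3.mpr h3
      · have hk := hrec j (by omega)
        rw [h2] at hk
        exact (Ek j hj).mpr hk
    · rw [haz (m+2) (by omega) (by omega), haz m (by omega) (by omega)]
      by_cases h2m : 2 ≤ m
      · rw [if_pos h2m, haz (m-2) (by omega) (by omega)]; simp
      · rw [if_neg h2m]; simp
end

section
/- Let n ≥ 1, κ ∈ ℂ, and for k = 2,…,n+1 let p_{k+1} : ℂⁿ → ℂ be a polynomial function of x = (x₂,…,x_{n+1}) that is weighted homogeneous of weight 2(k+1): p_{k+1}(λ⁴x₂, λ⁶x₃, …, λ^{2(n+1)}x_{n+1}) = λ^{2(k+1)} p_{k+1}(x₂,…,x_{n+1}) for all λ ∈ ℂ and all x. Let a, b, c, d ∈ ℂ with ad − bc = 1, let V, U ⊆ ℂ be open with ct + d ≠ 0 and μ(t) := (at+b)/(ct+d) ∈ V for all t ∈ U, and let h, x₂,…,x_{n+1} : V → ℂ be complex-differentiable with h' = −h² − κ x₂ and x_k' = p_{k+1}(x₂,…,x_{n+1}) − 2k h x_k on V. Then the functions ĥ(t) = h(μ(t))/(ct+d)² + c/(ct+d) and x̂_k(t) = x_k(μ(t))/(ct+d)^{2k}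 satisfy the same system on U: ĥ' = −ĥ² − κ x̂₂ and x̂_k' = p_{k+1}(x̂₂,…,x̂_{n+1}) − 2k ĥ x̂_k for k = 2,…,n+1. -/
/-- The action of `SL(2,ℂ)` on solutions of the homogeneous polynomial
dynamical system `h' = -h² - κx₂`, `x_k' = p_{k+1}(x) - 2k h x_k` associated
with the heat equation. Here `i : Fin n` stands for `k = i + 2`, so
`x i = x_{i+2}` and `p i = p_{i+3}`. -/
theorem SL2_action_on_dynamical_system
    (n : ℕ) (hn : 1 ≤ n) (κ : ℂ)
    (p : Fin n → (Fin n → ℂ) → ℂ)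
    (hpoly : ∀ i, ∃ P : MvPolynomial (Fin n) ℂ, ∀ x, p i x = MvPolynomial.eval x P)
    (hhom : ∀ (i : Fin n) (lam : ℂ) (x : Fin n → ℂ),
      p i (fun j => lam ^ (2 * ((j : ℕ) + 2)) * x j) = lam ^ (2 * ((i : ℕ) + 3)) * p i x)
    (a b c d : ℂ) (habcd : a * d - b * c = 1)
    (V U : Set ℂ) (hV : IsOpen V) (hU : IsOpen U)
    (hcd : ∀ t ∈ U, c * t + d ≠ 0)
    (μ : ℂ → ℂ) (hμ : ∀ t, μ t = (a * t + b) / (c * t + d))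
    (hmap : ∀ t ∈ U, μ t ∈ V)
    (h : ℂ → ℂ) (x : Fin n → ℂ → ℂ)
    (hh : DifferentiableOn ℂ h V) (hx : ∀ i, DifferentiableOn ℂ (x i) V)
    (hsysh : ∀ t ∈ V, deriv h t = -(h t) ^ 2 - κ * x ⟨0, hn⟩ t)
    (hsysx : ∀ i, ∀ t ∈ V,
      deriv (x i) t = p i (fun j => x j t) - 2 * ((i : ℕ) + 2) * h t * x i t)
    (hHat : ℂ → ℂ)
    (hhHat : ∀ t, hHat t = h (μ t) / (c * t + d) ^ 2 + c / (c * t + d))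
    (xHat : Fin n → ℂ → ℂ)
    (hxHat : ∀ i t, xHat i t = x i (μ t) / (c * t + d) ^ (2 * ((i : ℕ) + 2))) :
    (∀ t ∈ U, deriv hHat t = -(hHat t) ^ 2 - κ * xHat ⟨0, hn⟩ t) ∧
    (∀ i, ∀ t ∈ U,
      deriv (xHat i) t = p i (fun j => xHat j t) - 2 * ((i : ℕ) + 2) * hHat t * xHat i t) := by
  have hmu : ∀ t ∈ U, HasDerivAt μ (1 / (c * t + d) ^ 2) t := by
    intro t ht
    have hs0 : c * t + d ≠ 0 := hcd t ht
    have hden : HasDerivAt (fun t => c * t + d) c t := by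
      simpa using ((hasDerivAt_id t).const_mul c).add_const d
    have hnum : HasDerivAt (fun t => a * t + b) a t := by
      simpa using ((hasDerivAt_id t).const_mul a).add_const b
    have key : a * (c * t + d) - (a * t + b) * c = 1 := by linear_combination habcd
    rw [funext hμ]
    have := hnum.div hden hs0
    rw [key] at this
    exact this
  have hden : ∀ t : ℂ, HasDerivAt (fun t => c * t + d) c t := by
    intro t
    simpa using ((hasDerivAt_id t).const_mul c).add_const d
  constructor
  · intro t ht
    have hs0 : c * t + d ≠ 0 := hcd t ht
    have hm : μ t ∈ V := hmap t ht
    have hhm : HasDerivAt h (deriv h (μ t)) (μ t) :=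
      (hh.differentiableAt (hV.mem_nhds hm)).hasDerivAt
    have hcomp : HasDerivAt (fun t => h (μ t)) (deriv h (μ t) * (1 / (c * t + d) ^ 2)) t :=
      hhm.comp t (hmu t ht)
    have h1 := hcomp.div ((hden t).pow 2) (pow_ne_zero 2 hs0)
    simp only [Pi.pow_apply] at h1
    have h2 := (hasDerivAt_const t c).div (hden t) hs0
    have hfull := h1.add h2
    rw [funext hhHat, (show HasDerivAt (fun x => h (μ x) / (c * x + d) ^ 2 + c / (c * x + d)) _ t
      from hfull).deriv, hxHat, hsysh (μ t) hm]
    simp only [Fin.val_mk]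
    field_simp
    ring
  · intro i t ht
    have hs0 : c * t + d ≠ 0 := hcd t ht
    have hm : μ t ∈ V := hmap t ht
    have hxm : HasDerivAt (x i) (deriv (x i) (μ t)) (μ t) :=
      ((hx i).differentiableAt (hV.mem_nhds hm)).hasDerivAt
    have hcomp : HasDerivAt (fun t => x i (μ t))
        (deriv (x i) (μ t) * (1 / (c * t + d) ^ 2)) t := hxm.comp t (hmu t ht)
    have h1 := hcomp.div ((hden t).pow (2 * ((i : ℕ) + 2)))
      (pow_ne_zero (2 * ((i : ℕ) + 2)) hs0)
    simp only [Pi.pow_apply] at h1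
    have hpx : p i (fun j => xHat j t)
        = ((c * t + d)⁻¹) ^ (2 * ((i : ℕ) + 3)) * p i (fun j => x j (μ t)) := by
      rw [← hhom i (c * t + d)⁻¹ (fun j => x j (μ t))]
      congr 1
      funext j
      rw [hxHat, inv_pow, ← div_eq_inv_mul]
    rw [funext (hxHat i), (show HasDerivAt (fun t => x i (μ t) / (c * t + d) ^ (2 * ((i : ℕ) + 2))) _ t
      from h1).deriv, hpx, hhHat,
      hsysx i (μ t) hm, show 2 * ((i : ℕ) + 2) - 1 = 2 * (i : ℕ) + 3 from by omega]
    beta_reduce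
    rw [inv_pow,
      show 2 * ((i : ℕ) + 2) = (i : ℕ) * 2 + 4 from by ring,
      show 2 * ((i : ℕ) + 3) = (i : ℕ) * 2 + 6 from by ring,
      show 2 * (i : ℕ) + 3 = (i : ℕ) * 2 + 3 from by ring]
    simp only [pow_add, pow_mul]
    have hq0 : (c * t + d) ^ (i : ℕ) ≠ 0 := pow_ne_zero _ hs0
    push_cast
    generalize (p i fun j => x j (μ t)) = P
    generalize x i (μ t) = X
    generalize h (μ t) = H
    generalize (((i : ℕ) : ℂ)) = K
    revert hq0
    generalize (c * t + d) ^ (i : ℕ) = q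
    revert hs0
    generalize c * t + d = e
    intro hs0 hq0
    field_simp
    ring
end

section
/- Let n ≥ 0, b ∈ ℂ with b ≠ 0, let a₁,…,a_{n+1} ∈ ℂ, and define h(t) = (1/b) Σ_{k=1}^{n+1} 1/(t − a_k) on V = ℂ \ {a₁,…,a_{n+1}}. For t ∈ V let S(t) be the (n+2)×(n+2) matrix with rows and columns indexed by 0,…,n+1 and entries S(t)_{ij} = b · h^{(i−j)}(t)/(i−j)! for i ≥ j, S(t)_{i,i+1} = −(i+1) for 0 ≤ i ≤ n, and S(t)_{ij} = 0 for j > i+1, where h^{(m)} denotes the m-th complex derivative of h. Then det S(t) = 0 for all t ∈ V. -/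
open Polynomial Finset

private lemma analyticOnNhd_iteratedDeriv {U : Set ℂ} {f : ℂ → ℂ}
    (hf : AnalyticOnNhd ℂ f U) : ∀ m, AnalyticOnNhd ℂ (iteratedDeriv m f) U := by
  intro m
  induction m with
  | zero => simpa [iteratedDeriv_zero] using hf
  | succ m ih => rw [iteratedDeriv_succ]; exact ih.deriv

private lemma iteratedDeriv_const_mul'' (c : ℂ) (f : ℂ → ℂ) (m : ℕ) :
    iteratedDeriv m (fun s => c * f s) = fun x => c * iteratedDeriv m f x := by
  induction m with
  | zero => simp [iteratedDeriv_zero]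
  | succ m ih =>
    rw [iteratedDeriv_succ, ih, iteratedDeriv_succ]
    funext x
    rw [deriv_const_mul_field]

private lemma pascal_sum' (A : ℕ → ℂ) (m : ℕ) :
    ∑ j ∈ Finset.range (m + 2), ((m + 1).choose j : ℂ) * A j
      = ∑ j ∈ Finset.range (m + 1), (m.choose j : ℂ) * A (j + 1)
        + ∑ j ∈ Finset.range (m + 1), (m.choose j : ℂ) * A j := by
  rw [Finset.sum_range_succ' (fun j => (((m + 1).choose j : ℕ) : ℂ) * A j) (m + 1)]
  have h1 : ∀ j ∈ Finset.range (m + 1), (((m + 1).choose (j + 1) : ℕ) : ℂ) * A (j + 1)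
      = (m.choose j : ℂ) * A (j + 1) + (m.choose (j + 1) : ℂ) * A (j + 1) := by
    intro j _
    rw [Nat.choose_succ_succ']
    push_cast
    ring
  rw [Finset.sum_congr rfl h1, Finset.sum_add_distrib]
  have h2 : ∑ j ∈ Finset.range (m + 1), (m.choose (j + 1) : ℂ) * A (j + 1)
        + ((m.choose 0 : ℕ) : ℂ) * A 0
      = ∑ j ∈ Finset.range (m + 1), (m.choose j : ℂ) * A j := by
    rw [← Finset.sum_range_succ' (fun j => ((m.choose j : ℕ) : ℂ) * A j) (m + 1),
      Finset.sum_range_succ]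
    simp
  simp only [Nat.choose_zero_right, Nat.cast_one, one_mul] at h2 ⊢
  linear_combination h2

private lemma leibniz_iteratedDeriv {U : Set ℂ} (hU : IsOpen U) {f g : ℂ → ℂ}
    (hf : AnalyticOnNhd ℂ f U) (hg : AnalyticOnNhd ℂ g U) (m : ℕ) :
    ∀ x ∈ U, iteratedDeriv m (fun s => f s * g s) x =
      ∑ j ∈ Finset.range (m + 1),
        (m.choose j : ℂ) * iteratedDeriv j f x * iteratedDeriv (m - j) g x := by
  induction m with
  | zero => intro x hx; simp
  | succ m ih =>
    intro x hx
    have hD : ∀ (k : ℕ) (F : ℂ → ℂ), AnalyticOnNhd ℂ F U →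
        DifferentiableAt ℂ (iteratedDeriv k F) x :=
      fun k F hF => ((analyticOnNhd_iteratedDeriv hF k) x hx).differentiableAt
    rw [iteratedDeriv_succ]
    have hEq : (iteratedDeriv m (fun s => f s * g s)) =ᶠ[nhds x]
        (fun y => ∑ j ∈ Finset.range (m + 1),
          (m.choose j : ℂ) * iteratedDeriv j f y * iteratedDeriv (m - j) g y) := by
      filter_upwards [hU.mem_nhds hx] with y hy using ih y hy
    rw [hEq.deriv_eq]
    rw [deriv_fun_sum (fun j _ =>
      (by exact (((differentiableAt_const _).mul (hD j f hf)).mul (hD (m - j) g hg)) :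
        DifferentiableAt ℂ (fun y => (m.choose j : ℂ) * iteratedDeriv j f y * iteratedDeriv (m - j) g y) x))]
    have hterm : ∀ j ∈ Finset.range (m + 1),
        deriv (fun y => (m.choose j : ℂ) * iteratedDeriv j f y * iteratedDeriv (m - j) g y) x =
          (m.choose j : ℂ) * (iteratedDeriv (j + 1) f x
              * iteratedDeriv (m + 1 - (j + 1)) g x)
            + (m.choose j : ℂ) * (iteratedDeriv j f x * iteratedDeriv (m + 1 - j) g x) := by
      intro j hj
      have hj' : j ≤ m := Nat.lt_succ_iff.1 (Finset.mem_range.1 hj)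
      have e1 : m + 1 - (j + 1) = m - j := by omega
      have e2 : m + 1 - j = m - j + 1 := by omega
      have hfg : (fun y => (m.choose j : ℂ) * iteratedDeriv j f y * iteratedDeriv (m - j) g y)
          = fun y => (m.choose j : ℂ) * (iteratedDeriv j f y * iteratedDeriv (m - j) g y) := by
        funext y; ring
      rw [hfg, deriv_const_mul_field, deriv_fun_mul (hD j f hf) (hD (m - j) g hg),
        ← iteratedDeriv_succ, ← iteratedDeriv_succ, e1, e2]
      ring
    rw [Finset.sum_congr rfl hterm, Finset.sum_add_distrib]
    have := pascal_sum' (fun j => iteratedDeriv j f x * iteratedDeriv (m + 1 - j) g x) m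
    rw [← this]
    refine (Finset.sum_congr rfl fun j _ => ?_).symm
    ring

/-- The rational function `h(t) = (1/b) Σ_{k=1}^{n+1} 1/(t - a_k)` satisfies
`det S_n(h) = 0`, where `S_n(h)` is the `(n+2)×(n+2)` matrix with entries
`b h^{(i-j)}/(i-j)!` for `i ≥ j`, `-(i+1)` on the superdiagonal and `0`
above it. -/
theorem rational_solution_det_eq_zero
    (n : ℕ) (b : ℂ) (hb : b ≠ 0) (a : Fin (n + 1) → ℂ)
    (h : ℂ → ℂ) (hh : ∀ t, h t = (1 / b) * ∑ k, 1 / (t - a k))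
    (S : ℂ → Matrix (Fin (n + 2)) (Fin (n + 2)) ℂ)
    (hS : ∀ (t : ℂ) (i j : Fin (n + 2)),
      S t i j =
        if (j : ℕ) = (i : ℕ) + 1 then -(((i : ℕ) + 1 : ℂ))
        else if (j : ℕ) ≤ (i : ℕ) then
          b * iteratedDeriv ((i : ℕ) - (j : ℕ)) h t / ((i : ℕ) - (j : ℕ)).factorial
        else 0) :
    ∀ t : ℂ, (∀ k, t ≠ a k) → (S t).det = 0 := by
  intro t ht
  classical
  set P : Polynomial ℂ := ∏ k : Fin (n + 1), (X - C (a k)) with hP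
  set U : Set ℂ := ⋂ k : Fin (n + 1), {s | s ≠ a k} with hUdef
  have hUopen : IsOpen U := isOpen_iInter_of_finite fun k => isOpen_ne
  have htU : t ∈ U := Set.mem_iInter.2 fun k => ht k
  have hmemU : ∀ s ∈ U, ∀ k, s ≠ a k := fun s hs k => Set.mem_iInter.1 hs k
  set G : ℂ → ℂ := fun s => ∑ k, (s - a k)⁻¹ with hG
  have hbh : ∀ s, b * h s = G s := by
    intro s
    rw [hh, hG]
    field_simp
  have hGan : AnalyticOnNhd ℂ G U := by
    intro x hx
    exact Finset.analyticAt_fun_sum _ fun k _ =>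
      ((analyticAt_id.sub (analyticAt_const (𝕜 := ℂ))).inv (sub_ne_zero.2 (hmemU x hx k)))
  have hFan : AnalyticOnNhd ℂ (fun s => P.eval s) U :=
    fun x _ => (AnalyticOnNhd.eval_polynomial (𝕜 := ℂ) P) x (Set.mem_univ x)
  have hPiter : ∀ (q : Polynomial ℂ) (m : ℕ),
      iteratedDeriv m (fun s => q.eval s) = fun s => ((derivative^[m]) q).eval s := by
    intro q m
    induction m with
    | zero => simp
    | succ m ih =>
      rw [iteratedDeriv_succ, ih]
      funext s
      rw [Function.iterate_succ_apply', Polynomial.deriv]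
  have hPeval : ∀ s : ℂ, P.eval s = ∏ k, (s - a k) := by
    intro s
    rw [hP]
    simp [Polynomial.eval_prod]
  have hdeg : P.natDegree = n + 1 := by
    rw [hP, Polynomial.natDegree_prod _ _ fun k _ => X_sub_C_ne_zero (a k)]
    simp
  have hvanish : (derivative^[n + 2]) P = 0 :=
    Polynomial.iterate_derivative_eq_zero (by omega)
  have hPderiv : ∀ s : ℂ, (derivative P).eval s = ∑ k, ∏ l ∈ Finset.univ.erase k, (s - a l) := by
    intro s
    rw [← Polynomial.deriv]
    have hfun : (fun y : ℂ => P.eval y) = fun y => ∏ k, (y - a k) := funext hPeval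
    rw [hfun]
    have hd : HasDerivAt (fun y : ℂ => ∏ k, (y - a k))
        (∑ k, (∏ l ∈ Finset.univ.erase k, (s - a l)) • (1 : ℂ)) s :=
      HasDerivAt.fun_finset_prod fun k _ => (hasDerivAt_id s).sub_const (a k)
    rw [hd.deriv]
    simp
  have hkey : ∀ s ∈ U, G s * P.eval s = (derivative P).eval s := by
    intro s hs
    have hne : ∀ k : Fin (n + 1), s - a k ≠ 0 := fun k => sub_ne_zero.2 (hmemU s hs k)
    rw [hPderiv, hPeval, hG]
    simp only []
    rw [Finset.sum_mul]
    refine Finset.sum_congr rfl fun k _ => ?_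
    rw [← Finset.mul_prod_erase Finset.univ _ (Finset.mem_univ k),
      inv_mul_cancel_left₀ (hne k)]
  have hprod_iter : ∀ (m : ℕ), ∀ x ∈ U,
      iteratedDeriv m (fun s => P.eval s * G s) x = ((derivative^[m + 1]) P).eval x := by
    intro m x hx
    have heq : Set.EqOn (fun s => P.eval s * G s) (fun s => (derivative P).eval s) U :=
      fun s hs => by simp only []; rw [mul_comm]; exact hkey s hs
    rw [heq.iteratedDeriv_of_isOpen hUopen m hx, hPiter (derivative P) m]
    simp only []
    rw [← Function.iterate_succ_apply]
  have hbh_iter : ∀ (m : ℕ) (x : ℂ), b * iteratedDeriv m h x = iteratedDeriv m G x := by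
    intro m x
    have hGfun : G = fun s => b * h s := funext fun s => (hbh s).symm
    rw [hGfun, iteratedDeriv_const_mul'' b h m]
  set E : ℕ → ℂ := fun m => ((derivative^[m]) P).eval t with hE
  have main : ∀ iN : ℕ, iN ≤ n + 1 →
      ∑ jN ∈ Finset.range (iN + 1),
        b * iteratedDeriv (iN - jN) h t / ((iN - jN).factorial : ℂ)
          * (E jN / (jN.factorial : ℂ))
        = E (iN + 1) / (iN.factorial : ℂ) := by
    intro iN _
    have hL := leibniz_iteratedDeriv hUopen hFan hGan iN t htU
    have hLHS := hprod_iter iN t htU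
    rw [hL] at hLHS
    have hEiN : E (iN + 1) = ∑ j ∈ Finset.range (iN + 1),
        (iN.choose j : ℂ) * iteratedDeriv j (fun s => P.eval s) t
          * iteratedDeriv (iN - j) G t := by
      rw [hE]; exact hLHS.symm
    rw [hEiN, Finset.sum_div]
    refine Finset.sum_congr rfl fun j hj => ?_
    have hj' : j ≤ iN := Nat.lt_succ_iff.1 (Finset.mem_range.1 hj)
    have hFj : iteratedDeriv j (fun s => P.eval s) t = E j := by
      rw [hPiter P j]
    have hGj : b * iteratedDeriv (iN - j) h t = iteratedDeriv (iN - j) G t := hbh_iter _ _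
    rw [hGj, ← hFj, Nat.cast_choose ℂ hj']
    have f1 : ((j.factorial : ℂ)) ≠ 0 := Nat.cast_ne_zero.2 j.factorial_ne_zero
    have f2 : (((iN - j).factorial : ℂ)) ≠ 0 := Nat.cast_ne_zero.2 (iN - j).factorial_ne_zero
    have f3 : ((iN.factorial : ℂ)) ≠ 0 := Nat.cast_ne_zero.2 iN.factorial_ne_zero
    field_simp
  rw [← Matrix.exists_mulVec_eq_zero_iff]
  refine ⟨fun j : Fin (n + 2) => E (j : ℕ) / (((j : ℕ).factorial : ℕ) : ℂ), ?_, ?_⟩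
  · intro hv0
    have h0 := congrFun hv0 (0 : Fin (n + 2))
    have hP0 : P.eval t ≠ 0 := by
      rw [hPeval]
      exact Finset.prod_ne_zero_iff.2 fun k _ => sub_ne_zero.2 (ht k)
    simp [hE] at h0
    exact hP0 h0
  · funext i
    have hi : (i : ℕ) ≤ n + 1 := Nat.lt_succ_iff.1 i.isLt
    simp only [Matrix.mulVec, dotProduct, Pi.zero_apply]
    have hterm : ∀ j : Fin (n + 2),
        S t i j * (E (j : ℕ) / (((j : ℕ).factorial : ℕ) : ℂ))
          = (fun jN : ℕ =>
              (if jN = (i : ℕ) + 1 then -(((i : ℕ) + 1 : ℂ))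
               else if jN ≤ (i : ℕ) then
                 b * iteratedDeriv ((i : ℕ) - jN) h t / (((i : ℕ) - jN).factorial : ℂ)
               else 0) * (E jN / ((jN.factorial : ℕ) : ℂ))) (j : ℕ) := by
      intro j
      rw [hS]
    have hsum : ∑ j : Fin (n + 2), S t i j * (E (j : ℕ) / (((j : ℕ).factorial : ℕ) : ℂ))
        = ∑ jN ∈ Finset.range (n + 2),
            (fun jN : ℕ =>
              (if jN = (i : ℕ) + 1 then -(((i : ℕ) + 1 : ℂ))
               else if jN ≤ (i : ℕ) then
                 b * iteratedDeriv ((i : ℕ) - jN) h t / (((i : ℕ) - jN).factorial : ℂ)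
               else 0) * (E jN / ((jN.factorial : ℕ) : ℂ))) jN := by
      rw [← Fin.sum_univ_eq_sum_range]
      exact Finset.sum_congr rfl fun j _ => hterm j
    simp only [] at hsum
    rw [hsum]
    rcases Nat.lt_or_ge (i : ℕ) (n + 1) with hlt | hge
    · have hsub : ∑ jN ∈ Finset.range (n + 2),
            (if jN = (i : ℕ) + 1 then -(((i : ℕ) + 1 : ℂ))
             else if jN ≤ (i : ℕ) then
               b * iteratedDeriv ((i : ℕ) - jN) h t / (((i : ℕ) - jN).factorial : ℂ)
             else 0) * (E jN / ((jN.factorial : ℕ) : ℂ))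
          = ∑ jN ∈ Finset.range ((i : ℕ) + 2),
            (if jN = (i : ℕ) + 1 then -(((i : ℕ) + 1 : ℂ))
             else if jN ≤ (i : ℕ) then
               b * iteratedDeriv ((i : ℕ) - jN) h t / (((i : ℕ) - jN).factorial : ℂ)
             else 0) * (E jN / ((jN.factorial : ℕ) : ℂ)) := by
        refine (Finset.sum_subset (Finset.range_subset_range.2 (by omega)) ?_).symm
        intro jN hjN1 hjN
        have hcond : ¬ jN = (i : ℕ) + 1 ∧ ¬ jN ≤ (i : ℕ) := by
          have := Finset.mem_range.not.1 hjN
          omega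
        rw [if_neg hcond.1, if_neg hcond.2, zero_mul]
      rw [hsub, Finset.sum_range_succ, if_pos rfl]
      have hmain : ∑ jN ∈ Finset.range ((i : ℕ) + 1),
            (if jN = (i : ℕ) + 1 then -(((i : ℕ) + 1 : ℂ))
             else if jN ≤ (i : ℕ) then
               b * iteratedDeriv ((i : ℕ) - jN) h t / (((i : ℕ) - jN).factorial : ℂ)
             else 0) * (E jN / ((jN.factorial : ℕ) : ℂ))
          = E ((i : ℕ) + 1) / (((i : ℕ).factorial : ℕ) : ℂ) := by
        rw [← main (i : ℕ) hi]
        refine Finset.sum_congr rfl fun jN hjN => ?_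
        have hj' : jN ≤ (i : ℕ) := Nat.lt_succ_iff.1 (Finset.mem_range.1 hjN)
        rw [if_neg (by omega), if_pos hj']
      rw [hmain, Nat.factorial_succ]
      have f3 : (((i : ℕ).factorial : ℕ) : ℂ) ≠ 0 := Nat.cast_ne_zero.2 (i : ℕ).factorial_ne_zero
      have f4 : ((i : ℕ) : ℂ) + 1 ≠ 0 := by
        have h4 : (((i : ℕ) + 1 : ℕ) : ℂ) ≠ 0 := Nat.cast_ne_zero.2 (Nat.succ_ne_zero _)
        push_cast at h4
        exact h4
      push_cast
      field_simp
      ring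
    · have hieq : (i : ℕ) = n + 1 := le_antisymm hi hge
      have hall : ∑ jN ∈ Finset.range (n + 2),
            (if jN = (i : ℕ) + 1 then -(((i : ℕ) + 1 : ℂ))
             else if jN ≤ (i : ℕ) then
               b * iteratedDeriv ((i : ℕ) - jN) h t / (((i : ℕ) - jN).factorial : ℂ)
             else 0) * (E jN / ((jN.factorial : ℕ) : ℂ))
          = ∑ jN ∈ Finset.range ((i : ℕ) + 1),
              b * iteratedDeriv ((i : ℕ) - jN) h t / (((i : ℕ) - jN).factorial : ℂ)
                * (E jN / ((jN.factorial : ℕ) : ℂ)) := by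
        rw [hieq]
        refine Finset.sum_congr rfl fun jN hjN => ?_
        have hj' : jN ≤ n + 1 := Nat.lt_succ_iff.1 (Finset.mem_range.1 hjN)
        rw [if_neg (by omega), if_pos hj']
      rw [hall, main (i : ℕ) hi]
      have hz : E ((i : ℕ) + 1) = 0 := by
        rw [hE, hieq]
        simp [hvanish]
      rw [hz, zero_div]
end

section
/- Let a₁, a₂, a₃ ∈ ℂ and define y(t) = −2(1/(t − a₁) + 1/(t − a₂) + 1/(t − a₃)) on V = ℂ \ {a₁, a₂, a₃}. Then y satisfies the Chazy-12 equation with parameter k = 2: y''' = 2 y y'' − 3 (y')² + (1/8)(6 y' − y²)² at every point of V. -/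
private lemma hd_zpow (a : ℂ) (m : ℤ) {t : ℂ} (h : t ≠ a) :
    HasDerivAt (fun s => (s - a) ^ m) ((m : ℂ) * (t - a) ^ (m - 1)) t := by
  have h1 : HasDerivAt (fun s : ℂ => s - a) 1 t := (hasDerivAt_id t).sub_const a
  have h2 := hasDerivAt_zpow m (t - a) (Or.inl (sub_ne_zero.2 h))
  have h3 := h2.comp t h1
  simp only [mul_one] at h3
  exact h3

private lemma chazy_alg (u v w : ℂ) :
    12 * (u ^ 4 + v ^ 4 + w ^ 4) =
      2 * (-2 * (u + v + w)) * (-4 * (u ^ 3 + v ^ 3 + w ^ 3))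
        - 3 * (2 * (u ^ 2 + v ^ 2 + w ^ 2)) ^ 2
        + (1 / 8) * (6 * (2 * (u ^ 2 + v ^ 2 + w ^ 2)) - (-2 * (u + v + w)) ^ 2) ^ 2 := by
  ring

/-- `y(t) = -2(1/(t-a₁) + 1/(t-a₂) + 1/(t-a₃))` is a solution of the
Chazy-12 equation with parameter `k = 2`:
`y''' = 2yy'' - 3(y')² + (1/8)(6y' - y²)²`. -/
theorem rational_solution_chazy12
    (a₁ a₂ a₃ : ℂ) (y : ℂ → ℂ)
    (hy : ∀ t, y t = -2 * (1 / (t - a₁) + 1 / (t - a₂) + 1 / (t - a₃))) :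
    ∀ t : ℂ, t ≠ a₁ → t ≠ a₂ → t ≠ a₃ →
      deriv (deriv (deriv y)) t =
        2 * y t * deriv (deriv y) t - 3 * (deriv y t) ^ 2
          + (1 / 8) * (6 * deriv y t - y t ^ 2) ^ 2 := by
  have hy' : y = fun s => -2 * ((s - a₁) ^ (-1 : ℤ) + (s - a₂) ^ (-1 : ℤ) + (s - a₃) ^ (-1 : ℤ)) := by
    funext s; rw [hy s]; simp [zpow_neg, one_div]
  set V : Set ℂ := {s | s ≠ a₁ ∧ s ≠ a₂ ∧ s ≠ a₃} with hVdef
  have hV : IsOpen V := by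
    have : V = {s : ℂ | s ≠ a₁} ∩ ({s : ℂ | s ≠ a₂} ∩ {s : ℂ | s ≠ a₃}) := by
      ext s; simp [hVdef, and_assoc]
    rw [this]; exact isOpen_ne.inter (isOpen_ne.inter isOpen_ne)
  set g1 : ℂ → ℂ := fun s => 2 * ((s - a₁) ^ (-2 : ℤ) + (s - a₂) ^ (-2 : ℤ) + (s - a₃) ^ (-2 : ℤ)) with hg1
  set g2 : ℂ → ℂ := fun s => -4 * ((s - a₁) ^ (-3 : ℤ) + (s - a₂) ^ (-3 : ℤ) + (s - a₃) ^ (-3 : ℤ)) with hg2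
  set g3 : ℂ → ℂ := fun s => 12 * ((s - a₁) ^ (-4 : ℤ) + (s - a₂) ^ (-4 : ℤ) + (s - a₃) ^ (-4 : ℤ)) with hg3
  have key1 : ∀ s ∈ V, HasDerivAt y (g1 s) s := by
    rintro s ⟨hs1, hs2, hs3⟩
    rw [hy']
    have := (((hd_zpow a₁ (-1) hs1).add (hd_zpow a₂ (-1) hs2)).add (hd_zpow a₃ (-1) hs3)).const_mul (-2 : ℂ)
    convert this using 1
    all_goals try rfl
    push_cast
    norm_num [hg1]
    ring
  have key2 : ∀ s ∈ V, HasDerivAt g1 (g2 s) s := by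
    rintro s ⟨hs1, hs2, hs3⟩
    have := (((hd_zpow a₁ (-2) hs1).add (hd_zpow a₂ (-2) hs2)).add (hd_zpow a₃ (-2) hs3)).const_mul (2 : ℂ)
    convert this using 1
    all_goals try rfl
    push_cast
    norm_num [hg2]
    ring
  have key3 : ∀ s ∈ V, HasDerivAt g2 (g3 s) s := by
    rintro s ⟨hs1, hs2, hs3⟩
    have := (((hd_zpow a₁ (-3) hs1).add (hd_zpow a₂ (-3) hs2)).add (hd_zpow a₃ (-3) hs3)).const_mul (-4 : ℂ)
    convert this using 1
    all_goals try rfl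
    push_cast
    norm_num [hg3]
    ring
  have d1 : ∀ s ∈ V, deriv y s = g1 s := fun s hs => (key1 s hs).deriv
  have d2 : ∀ s ∈ V, deriv (deriv y) s = g2 s := by
    intro s hs
    have e : deriv y =ᶠ[nhds s] g1 := by
      filter_upwards [hV.mem_nhds hs] with u hu using d1 u hu
    rw [e.deriv_eq]
    exact (key2 s hs).deriv
  have d3 : ∀ s ∈ V, deriv (deriv (deriv y)) s = g3 s := by
    intro s hs
    have e : deriv (deriv y) =ᶠ[nhds s] g2 := by
      filter_upwards [hV.mem_nhds hs] with u hu using d2 u hu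
    rw [e.deriv_eq]
    exact (key3 s hs).deriv
  intro t h1 h2 h3
  have htV : t ∈ V := ⟨h1, h2, h3⟩
  rw [d3 t htV, d2 t htV, d1 t htV, hy t, hg1, hg2, hg3]
  have e1 : ∀ a : ℂ, (t - a) ^ (-2 : ℤ) = ((t - a)⁻¹) ^ 2 := by
    intro a; rw [zpow_neg, ← inv_zpow]; norm_cast
  have e2 : ∀ a : ℂ, (t - a) ^ (-3 : ℤ) = ((t - a)⁻¹) ^ 3 := by
    intro a; rw [zpow_neg, ← inv_zpow]; norm_cast
  have e3 : ∀ a : ℂ, (t - a) ^ (-4 : ℤ) = ((t - a)⁻¹) ^ 4 := by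
    intro a; rw [zpow_neg, ← inv_zpow]; norm_cast
  simp only [e1, e2, e3, one_div]
  linear_combination chazy_alg ((t - a₁)⁻¹) ((t - a₂)⁻¹) ((t - a₃)⁻¹)
end

section
/- Let a, b ∈ ℂ and define h(t) = (1/2)(1/(t − a) + 1/(t − b)) on V = ℂ \ {a, b}. Then h satisfies h'' + 6 h h' + 4 h³ = 0 at every point of V. -/
set_option maxHeartbeats 1000000


/-- `h(t) = (1/2)(1/(t-a) + 1/(t-b))` is a solution of the equation
`h'' + 6hh' + 4h³ = 0` (the ODE associated with the heat equation for
`n = 1`). -/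
theorem rational_solution_case_n_one
    (a b : ℂ) (h : ℂ → ℂ)
    (hh : ∀ t, h t = (1 / 2) * (1 / (t - a) + 1 / (t - b))) :
    ∀ t : ℂ, t ≠ a → t ≠ b →
      deriv (deriv h) t + 6 * h t * deriv h t + 4 * h t ^ 3 = 0 := by
  have hfun : h = fun t => (1/2 : ℂ) * ((t-a)⁻¹ + (t-b)⁻¹) := by
    funext t; rw [hh]; ring
  set g : ℂ → ℂ := fun s => -(1/2 : ℂ) * (((s-a)^2)⁻¹ + ((s-b)^2)⁻¹) with hg
  have hd : ∀ s : ℂ, s ≠ a → s ≠ b → HasDerivAt h (g s) s := by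
    intro s hsa hsb
    have ha' : s - a ≠ 0 := sub_ne_zero.mpr hsa
    have hb' : s - b ≠ 0 := sub_ne_zero.mpr hsb
    have h1 : HasDerivAt (fun t : ℂ => (t-a)⁻¹) (-1 / (s-a)^2) s :=
      ((hasDerivAt_id s).sub_const a).inv ha'
    have h2 : HasDerivAt (fun t : ℂ => (t-b)⁻¹) (-1 / (s-b)^2) s :=
      ((hasDerivAt_id s).sub_const b).inv hb'
    have h3 := (h1.fun_add h2).const_mul (1/2 : ℂ)
    rw [hfun]
    refine HasDerivAt.congr_deriv h3 ?_
    simp only [neg_div, one_div]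
    ring
  intro t hta htb
  have ha : t - a ≠ 0 := sub_ne_zero.mpr hta
  have hb : t - b ≠ 0 := sub_ne_zero.mpr htb
  have hopen : IsOpen {s : ℂ | s ≠ a ∧ s ≠ b} := by
    have : {s : ℂ | s ≠ a ∧ s ≠ b} = {a}ᶜ ∩ {b}ᶜ := rfl
    rw [this]
    exact (isOpen_compl_singleton).inter (isOpen_compl_singleton)
  have hmem : {s : ℂ | s ≠ a ∧ s ≠ b} ∈ nhds t :=
    hopen.mem_nhds ⟨hta, htb⟩
  have heq : deriv h =ᶠ[nhds t] g := by
    filter_upwards [hmem] with s hs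
    exact (hd s hs.1 hs.2).deriv
  -- derivative of g at t
  have hgd : HasDerivAt g (((t-a)^3)⁻¹ + ((t-b)^3)⁻¹) t := by
    have p1 : HasDerivAt (fun s : ℂ => (s-a)^2) (2*(t-a)) t := by
      have := (((hasDerivAt_id t).sub_const a).fun_pow 2)
      simpa using this
    have p2 : HasDerivAt (fun s : ℂ => (s-b)^2) (2*(t-b)) t := by
      have := (((hasDerivAt_id t).sub_const b).fun_pow 2)
      simpa using this
    have q1 := p1.inv (pow_ne_zero 2 ha)
    have q2 := p2.inv (pow_ne_zero 2 hb)
    have h3 := (q1.fun_add q2).const_mul (-(1/2) : ℂ)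
    refine HasDerivAt.congr_deriv h3 ?_
    field_simp
    ring
  have hd2 : deriv (deriv h) t = ((t-a)^3)⁻¹ + ((t-b)^3)⁻¹ := by
    rw [heq.deriv_eq]
    exact hgd.deriv
  rw [hd2, (hd t hta htb).deriv, hh, hg]
  simp only [one_div, ← inv_pow]
  ring
end

section
/- Let c₄ ∈ ℂ, let V ⊆ ℂ be open, and let h, x₂, x₃ : V → ℂ be complex-differentiable functions satisfying h' = −h² + x₂, x₂' = x₃ − 4 h x₂, and x₃' = c₄ x₂² − 6 h x₃ on V. Then h satisfies the third-order equation h''' + 12 h h'' − 18 (h')² + (24 − c₄)(h' + h²)² = 0 at every point of V. -/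
/-- If `(h, x₂, x₃)` solves the dynamical system `h' = -h² + x₂`,
`x₂' = x₃ - 4hx₂`, `x₃' = c₄x₂² - 6hx₃`, then `h` satisfies the third-order
equation `h''' + 12hh'' - 18(h')² + (24 - c₄)(h' + h²)² = 0` (which becomes
Chazy-3 for `c₄ = 24` under `y = -6h`). -/
theorem case_n_two_ODE
    (c₄ : ℂ) (V : Set ℂ) (hV : IsOpen V)
    (h x₂ x₃ : ℂ → ℂ)
    (hh : DifferentiableOn ℂ h V)
    (hx₂ : DifferentiableOn ℂ x₂ V)
    (hx₃ : DifferentiableOn ℂ x₃ V)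
    (hsys1 : ∀ t ∈ V, deriv h t = -(h t) ^ 2 + x₂ t)
    (hsys2 : ∀ t ∈ V, deriv x₂ t = x₃ t - 4 * h t * x₂ t)
    (hsys3 : ∀ t ∈ V, deriv x₃ t = c₄ * x₂ t ^ 2 - 6 * h t * x₃ t) :
    ∀ t ∈ V,
      deriv (deriv (deriv h)) t + 12 * h t * deriv (deriv h) t
        - 18 * (deriv h t) ^ 2 + (24 - c₄) * (deriv h t + h t ^ 2) ^ 2 = 0 := by
  -- second derivative closed form
  have h2 : ∀ t ∈ V, deriv (deriv h) t
      = 2 * h t ^ 3 - 6 * h t * x₂ t + x₃ t := by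
    intro t ht
    have hdh : DifferentiableAt ℂ h t := hh.differentiableAt (hV.mem_nhds ht)
    have hdx₂ : DifferentiableAt ℂ x₂ t := hx₂.differentiableAt (hV.mem_nhds ht)
    have heq : deriv h =ᶠ[nhds t] (fun s => -(h s) ^ 2 + x₂ s) := by
      filter_upwards [hV.mem_nhds ht] with s hs using hsys1 s hs
    have hd : HasDerivAt (fun s => -(h s) ^ 2 + x₂ s)
        (-(2 * h t ^ 1 * deriv h t) + deriv x₂ t) t := by
      have := ((hdh.hasDerivAt.pow 2).neg.add hdx₂.hasDerivAt)
      convert this using 1 <;> first | rfl | (simp; done) | ring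
    rw [heq.deriv_eq, hd.deriv, hsys1 t ht, hsys2 t ht]
    ring
  intro t ht
  have hdh : DifferentiableAt ℂ h t := hh.differentiableAt (hV.mem_nhds ht)
  have hdx₂ : DifferentiableAt ℂ x₂ t := hx₂.differentiableAt (hV.mem_nhds ht)
  have hdx₃ : DifferentiableAt ℂ x₃ t := hx₃.differentiableAt (hV.mem_nhds ht)
  have heq : deriv (deriv h) =ᶠ[nhds t]
      (fun s => 2 * h s ^ 3 - 6 * h s * x₂ s + x₃ s) := by
    filter_upwards [hV.mem_nhds ht] with s hs using h2 s hs
  have hd : HasDerivAt (fun s => 2 * h s ^ 3 - 6 * h s * x₂ s + x₃ s)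
      (2 * (3 * h t ^ 2 * deriv h t)
        - (6 * deriv h t * x₂ t + 6 * h t * deriv x₂ t) + deriv x₃ t) t := by
    have d1 : HasDerivAt (fun s => 2 * h s ^ 3) (2 * (3 * h t ^ 2 * deriv h t)) t := by
      simpa using (hdh.hasDerivAt.pow 3).const_mul (2 : ℂ)
    have d2 : HasDerivAt (fun s => 6 * h s * x₂ s)
        (6 * deriv h t * x₂ t + 6 * h t * deriv x₂ t) t := by
      have := ((hdh.hasDerivAt.const_mul (6 : ℂ)).mul hdx₂.hasDerivAt)
      exact this
    exact (d1.sub d2).add hdx₃.hasDerivAt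
  have h3 : deriv (deriv (deriv h)) t
      = 2 * (3 * h t ^ 2 * deriv h t)
        - (6 * deriv h t * x₂ t + 6 * h t * deriv x₂ t) + deriv x₃ t := by
    rw [heq.deriv_eq, hd.deriv]
  rw [h3, h2 t ht, hsys1 t ht, hsys2 t ht, hsys3 t ht]
  ring
end

section
/- Let c₄ ∈ ℂ, let V ⊆ ℂ be open, let h : V → ℂ be complex-differentiable (hence analytic), and define E(h) = h''' + 12 h h'' − 18 (h')² + (24 − c₄)(h' + h²)². Then the identity (E(h))' + 8 h · E(h) = h'''' + 20 h h''' − 24 h' h'' + 96 h² h'' − 144 h (h')² + (48 − 2c₄)(h' + h²)(h'' + 6 h h' + 4 h³) holds at every point of V. -/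
/-- For `E(h) = h''' + 12hh'' - 18(h')² + (24 - c₄)(h' + h²)²` (the ODE for
`n = 2` with `P₂ = c₄x₂²`), the identity
`(E(h))' + 8h E(h) = h'''' + 20hh''' - 24h'h'' + 96h²h'' - 144h(h')²
+ (48 - 2c₄)(h' + h²)(h'' + 6hh' + 4h³)` holds. -/
theorem case_n_two_to_n_three_identity
    (c₄ : ℂ) (V : Set ℂ) (hV : IsOpen V)
    (h : ℂ → ℂ) (hh : DifferentiableOn ℂ h V)
    (E : ℂ → ℂ)
    (hE : ∀ t, E t = deriv (deriv (deriv h)) t + 12 * h t * deriv (deriv h) t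
      - 18 * (deriv h t) ^ 2 + (24 - c₄) * (deriv h t + h t ^ 2) ^ 2) :
    ∀ t ∈ V,
      deriv E t + 8 * h t * E t =
        deriv (deriv (deriv (deriv h))) t + 20 * h t * deriv (deriv (deriv h)) t
          - 24 * deriv h t * deriv (deriv h) t + 96 * h t ^ 2 * deriv (deriv h) t
          - 144 * h t * (deriv h t) ^ 2
          + (48 - 2 * c₄) * (deriv h t + h t ^ 2) *
              (deriv (deriv h) t + 6 * h t * deriv h t + 4 * h t ^ 3) := by
  intro t ht
  have ha0 : AnalyticOnNhd ℂ h V := hh.analyticOnNhd hV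
  have ha1 : AnalyticOnNhd ℂ (deriv h) V := ha0.deriv
  have ha2 : AnalyticOnNhd ℂ (deriv (deriv h)) V := ha1.deriv
  have ha3 : AnalyticOnNhd ℂ (deriv (deriv (deriv h))) V := ha2.deriv
  have hd0 : HasDerivAt h (deriv h t) t := ((ha0 t ht).differentiableAt).hasDerivAt
  have hd1 : HasDerivAt (deriv h) (deriv (deriv h) t) t :=
    ((ha1 t ht).differentiableAt).hasDerivAt
  have hd2 : HasDerivAt (deriv (deriv h)) (deriv (deriv (deriv h)) t) t :=
    ((ha2 t ht).differentiableAt).hasDerivAt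
  have hd3 : HasDerivAt (deriv (deriv (deriv h)))
      (deriv (deriv (deriv (deriv h))) t) t := ((ha3 t ht).differentiableAt).hasDerivAt
  have hEfun : E = fun t => deriv (deriv (deriv h)) t + 12 * h t * deriv (deriv h) t
      - 18 * (deriv h t) ^ 2 + (24 - c₄) * (deriv h t + h t ^ 2) ^ 2 := funext hE
  have HD : HasDerivAt E
      (deriv (deriv (deriv (deriv h))) t
        + (12 * deriv h t * deriv (deriv h) t + 12 * h t * deriv (deriv (deriv h)) t)
        - 18 * (2 * deriv h t * deriv (deriv h) t)
        + (24 - c₄) * (2 * (deriv h t + h t ^ 2)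
            * (deriv (deriv h) t + 2 * h t * deriv h t))) t := by
    rw [hEfun]
    have h1 : HasDerivAt (fun t => 12 * h t * deriv (deriv h) t)
        (12 * deriv h t * deriv (deriv h) t + 12 * h t * deriv (deriv (deriv h)) t) t := by
      have := ((hd0.const_mul (12 : ℂ)).mul hd2)
      convert this using 1 <;> first | rfl | ring | (funext; ring)
    have h2 : HasDerivAt (fun t => 18 * (deriv h t) ^ 2)
        (18 * (2 * deriv h t * deriv (deriv h) t)) t := by
      have := ((hd1.pow 2).const_mul (18 : ℂ))
      convert this using 1 <;> first | rfl | (push_cast; ring) | (funext; ring) | (funext x; simp; ring)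
    have h3 : HasDerivAt (fun t => (24 - c₄) * (deriv h t + h t ^ 2) ^ 2)
        ((24 - c₄) * (2 * (deriv h t + h t ^ 2)
            * (deriv (deriv h) t + 2 * h t * deriv h t))) t := by
      have := (((hd1.add (hd0.pow 2)).pow 2).const_mul ((24 : ℂ) - c₄))
      convert this using 1 <;> first | rfl | (simp only [Pi.add_apply, Pi.pow_apply]; push_cast; ring)
    exact ((hd3.add h1).sub h2).add h3
  rw [HD.deriv, hE t]
  ring
end

section
/- Let a₁, a₂, a₃, a₄ ∈ ℂ and define h(t) = (1/4)(1/(t − a₁) + 1/(t − a₂) + 1/(t − a₃) + 1/(t − a₄)) on V = ℂ \ {a₁, a₂, a₃, a₄}. Then h satisfies h'''' + 20 h h''' − 24 h' h'' + 96 h² h'' − 144 h (h')² + 64 (h' + h²)(h'' + 6 h h' + 4 h³) = 0 at every point of V. -/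
private lemma hd_zpow_sub {a t : ℂ} (ha : t ≠ a) (m : ℤ) :
    HasDerivAt (fun s : ℂ => (s - a) ^ m) ((m : ℂ) * (t - a) ^ (m - 1)) t := by
  have h1 : HasDerivAt (fun s : ℂ => s - a) 1 t := (hasDerivAt_id t).sub_const a
  have h2 := (hasDerivAt_zpow m (t - a) (Or.inl (sub_ne_zero.2 ha))).comp t h1
  simp only [mul_one] at h2
  exact h2

private lemma hd_sum (a₁ a₂ a₃ a₄ : ℂ) (m : ℤ) (c : ℂ) {t : ℂ}
    (h1 : t ≠ a₁) (h2 : t ≠ a₂) (h3 : t ≠ a₃) (h4 : t ≠ a₄) :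
    HasDerivAt (fun s : ℂ => c * ((s - a₁) ^ m + (s - a₂) ^ m + (s - a₃) ^ m + (s - a₄) ^ m))
      (c * ((m : ℂ) * (t - a₁) ^ (m - 1) + (m : ℂ) * (t - a₂) ^ (m - 1)
        + (m : ℂ) * (t - a₃) ^ (m - 1) + (m : ℂ) * (t - a₄) ^ (m - 1))) t :=
  ((((hd_zpow_sub h1 m).add (hd_zpow_sub h2 m)).add (hd_zpow_sub h3 m)).add
    (hd_zpow_sub h4 m)).const_mul c

/-- `h(t) = (1/4)(1/(t-a₁) + 1/(t-a₂) + 1/(t-a₃) + 1/(t-a₄))` is the general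
solution of the fourth-order equation associated with the heat equation for
`n = 3`, `c₅ = -16`:
`h'''' + 20hh''' - 24h'h'' + 96h²h'' - 144h(h')² + 64(h'+h²)(h''+6hh'+4h³) = 0`. -/
theorem rational_solution_case_n_three
    (a₁ a₂ a₃ a₄ : ℂ) (h : ℂ → ℂ)
    (hh : ∀ t, h t = (1 / 4) *
      (1 / (t - a₁) + 1 / (t - a₂) + 1 / (t - a₃) + 1 / (t - a₄))) :
    ∀ t : ℂ, t ≠ a₁ → t ≠ a₂ → t ≠ a₃ → t ≠ a₄ →
      deriv (deriv (deriv (deriv h))) t + 20 * h t * deriv (deriv (deriv h)) t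
        - 24 * deriv h t * deriv (deriv h) t + 96 * h t ^ 2 * deriv (deriv h) t
        - 144 * h t * (deriv h t) ^ 2
        + 64 * (deriv h t + h t ^ 2) *
            (deriv (deriv h) t + 6 * h t * deriv h t + 4 * h t ^ 3) = 0 := by
  -- the auxiliary functions: k-th derivative of h
  set H : ℕ → ℂ → ℂ := fun k s =>
    ((1/4 : ℂ) * (-1 : ℂ) ^ k * (Nat.factorial k : ℂ)) *
      ((s - a₁) ^ (-(k : ℤ) - 1) + (s - a₂) ^ (-(k : ℤ) - 1)
        + (s - a₃) ^ (-(k : ℤ) - 1) + (s - a₄) ^ (-(k : ℤ) - 1)) with hH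
  have hU : IsOpen {s : ℂ | s ≠ a₁ ∧ s ≠ a₂ ∧ s ≠ a₃ ∧ s ≠ a₄} := by
    have : {s : ℂ | s ≠ a₁ ∧ s ≠ a₂ ∧ s ≠ a₃ ∧ s ≠ a₄} =
        ({a₁}ᶜ ∩ ({a₂}ᶜ ∩ ({a₃}ᶜ ∩ {a₄}ᶜ))) := by ext s; simp [and_assoc]
    rw [this]
    exact (isOpen_compl_singleton.inter (isOpen_compl_singleton.inter
      (isOpen_compl_singleton.inter isOpen_compl_singleton)))
  have hHder : ∀ k : ℕ, ∀ s ∈ {s : ℂ | s ≠ a₁ ∧ s ≠ a₂ ∧ s ≠ a₃ ∧ s ≠ a₄},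
      HasDerivAt (H k) (H (k+1) s) s := by
    intro k s hs
    obtain ⟨h1, h2, h3, h4⟩ := hs
    have := hd_sum a₁ a₂ a₃ a₄ (-(k : ℤ) - 1)
      ((1/4 : ℂ) * (-1 : ℂ) ^ k * (Nat.factorial k : ℂ)) h1 h2 h3 h4
    have e1 : (-(k : ℤ) - 1) - 1 = -((k:ℕ)+1 : ℕ) - 1 := by push_cast; ring
    convert this using 1
    rw [hH]
    simp only [e1]
    rw [Nat.factorial_succ]
    push_cast
    ring
  -- h equals H 0 everywhere
  have hh0 : h = H 0 := by
    funext s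
    rw [hh s, hH]
    norm_num
  -- derivative chain
  have key : ∀ k : ℕ, ∀ s ∈ {s : ℂ | s ≠ a₁ ∧ s ≠ a₂ ∧ s ≠ a₃ ∧ s ≠ a₄},
      deriv (H k) s = H (k+1) s := fun k s hs => (hHder k s hs).deriv
  intro t h1 h2 h3 h4
  have htU : t ∈ {s : ℂ | s ≠ a₁ ∧ s ≠ a₂ ∧ s ≠ a₃ ∧ s ≠ a₄} := ⟨h1, h2, h3, h4⟩
  have hnhds : {s : ℂ | s ≠ a₁ ∧ s ≠ a₂ ∧ s ≠ a₃ ∧ s ≠ a₄} ∈ nhds t :=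
    hU.mem_nhds htU
  -- eventual equalities
  have ev : ∀ k : ℕ, deriv (H k) =ᶠ[nhds t] H (k+1) := fun k =>
    Filter.eventually_of_mem hnhds (key k)
  have d1 : deriv h t = H 1 t := by rw [hh0]; exact key 0 t htU
  have d1f : deriv h =ᶠ[nhds t] H 1 := by rw [hh0]; exact ev 0
  have d2 : deriv (deriv h) t = H 2 t := by
    rw [d1f.deriv_eq]; exact key 1 t htU
  have d2f : deriv (deriv h) =ᶠ[nhds t] H 2 := by
    filter_upwards [hU.eventually_mem htU, (ev 0).eventually_nhds] with s hs hds
    rw [hh0, Filter.EventuallyEq.deriv_eq hds]; exact key 1 s hs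
  have d3 : deriv (deriv (deriv h)) t = H 3 t := by
    rw [d2f.deriv_eq]; exact key 2 t htU
  have d3f : deriv (deriv (deriv h)) =ᶠ[nhds t] H 3 := by
    filter_upwards [hU.eventually_mem htU, d2f.eventually_nhds] with s hs hds
    rw [Filter.EventuallyEq.deriv_eq hds]; exact key 2 s hs
  have d4 : deriv (deriv (deriv (deriv h))) t = H 4 t := by
    rw [d3f.deriv_eq]; exact key 3 t htU
  rw [d1, d2, d3, d4, hh0, hH]
  -- now a polynomial identity in xᵢ = (t - aᵢ)⁻¹
  have ne1 : t - a₁ ≠ 0 := sub_ne_zero.2 h1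
  have ne2 : t - a₂ ≠ 0 := sub_ne_zero.2 h2
  have ne3 : t - a₃ ≠ 0 := sub_ne_zero.2 h3
  have ne4 : t - a₄ ≠ 0 := sub_ne_zero.2 h4
  have hz : ∀ (x : ℂ), x ≠ 0 → ∀ k : ℕ, x ^ (-(k : ℤ) - 1) = (x⁻¹) ^ (k + 1) := by
    intro x hx k
    have e : (-(k : ℤ) - 1) = -((k + 1 : ℕ) : ℤ) := by push_cast; ring
    rw [e, zpow_neg, zpow_natCast, inv_pow]
  simp only [hz _ ne1, hz _ ne2, hz _ ne3, hz _ ne4]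
  set x₁ := (t - a₁)⁻¹
  set x₂ := (t - a₂)⁻¹
  set x₃ := (t - a₃)⁻¹
  set x₄ := (t - a₄)⁻¹
  norm_num [Nat.factorial]
  ring
end
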